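/- Let Φ be an s×s positive definite matrix, t ∈ ℝˢ, C ≥ 0, and define h(u) = (u−t)ᵀΦ(u−t) + C. For α ≥ √s and any ũ ∈ ℝˢ, let E(ũ,α) = {u ∈ ℝˢ : √h(u) − √h(ũ) > α}. Then ∫_{E(ũ,α)} exp(−h(u)/2) du / ∫_{ℝˢ} exp(−h(u)/2) du ≤ exp(−(α−√s)²/2). -/

import Mathlib

open MeasureTheory Matrix


lemma quad_cont {s : ℕ} (Φ : Matrix (Fin s) (Fin s) ℝ) :
    Continuous fun v : Fin s → ℝ => v ⬝ᵥ Φ.mulVec v := by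
  simp only [dotProduct, Matrix.mulVec, dotProduct]
  fun_prop

lemma quad_smul {s : ℕ} (Φ : Matrix (Fin s) (Fin s) ℝ) (a : ℝ) (v : Fin s → ℝ) :
    (a • v) ⬝ᵥ Φ.mulVec (a • v) = a ^ 2 * (v ⬝ᵥ Φ.mulVec v) := by
  rw [Matrix.mulVec_smul, smul_dotProduct, dotProduct_smul]
  simp [smul_eq_mul]; ring

lemma quad_lower {s : ℕ} (hs : 0 < s) {Φ : Matrix (Fin s) (Fin s) ℝ} (hΦ : Φ.PosDef) :
    ∃ μ > 0, ∀ v : Fin s → ℝ, μ * ‖v‖ ^ 2 ≤ v ⬝ᵥ Φ.mulVec v := by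
  haveI : Nonempty (Fin s) := ⟨⟨0, hs⟩⟩
  have hsph : (Metric.sphere (0 : Fin s → ℝ) 1).Nonempty :=
    NormedSpace.sphere_nonempty.2 zero_le_one
  obtain ⟨w, hw, hmin⟩ := (isCompact_sphere (0 : Fin s → ℝ) 1).exists_isMinOn hsph
    (quad_cont Φ).continuousOn
  have hw1 : ‖w‖ = 1 := by simpa using hw
  have hw0 : w ≠ 0 := by intro h; rw [h] at hw1; simp at hw1
  refine ⟨w ⬝ᵥ Φ.mulVec w, hΦ.dotProduct_mulVec_pos hw0, fun v => ?_⟩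
  rcases eq_or_ne v 0 with rfl | hv
  · simp
  · have hn : (0:ℝ) < ‖v‖ := norm_pos_iff.2 hv
    have hmem : ‖v‖⁻¹ • v ∈ Metric.sphere (0 : Fin s → ℝ) 1 := by
      simp [norm_smul, abs_of_pos (inv_pos.2 hn), inv_mul_cancel₀ hn.ne']
    have hle : (w ⬝ᵥ Φ.mulVec w) ≤ (‖v‖⁻¹ • v) ⬝ᵥ Φ.mulVec (‖v‖⁻¹ • v) := hmin hmem
    have hvq : v ⬝ᵥ Φ.mulVec v = ‖v‖ ^ 2 * ((‖v‖⁻¹ • v) ⬝ᵥ Φ.mulVec (‖v‖⁻¹ • v)) := by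
      rw [quad_smul]
      field_simp
    rw [hvq]
    nlinarith [sq_nonneg ‖v‖]

lemma quad_integrable {s : ℕ} (hs : 0 < s) {Φ : Matrix (Fin s) (Fin s) ℝ} (hΦ : Φ.PosDef)
    {c : ℝ} (hc : 0 < c) :
    Integrable fun v : Fin s → ℝ => Real.exp (-(c * (v ⬝ᵥ Φ.mulVec v))) := by
  obtain ⟨μ, hμ, hlow⟩ := quad_lower hs hΦ
  have hb : (0:ℝ) < c * μ / s := by positivity
  have hint : Integrable fun v : Fin s → ℝ => ∏ i, Real.exp (-(c * μ / s) * (v i) ^ 2) :=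
    Integrable.fintype_prod (f := fun _ (x : ℝ) => Real.exp (-(c * μ / s) * x ^ 2))
      (fun _ => integrable_exp_neg_mul_sq hb)
  have hcont : Continuous fun v : Fin s → ℝ => Real.exp (-(c * (v ⬝ᵥ Φ.mulVec v))) :=
    ((continuous_const.mul (quad_cont Φ)).neg).rexp
  refine hint.mono hcont.aestronglyMeasurable ?_
  filter_upwards with v
  rw [Real.norm_eq_abs, abs_of_pos (Real.exp_pos _), Real.norm_eq_abs, ← Real.exp_sum,
    abs_of_pos (Real.exp_pos _)]
  apply Real.exp_le_exp.2
  have h1 : μ * ‖v‖ ^ 2 ≤ v ⬝ᵥ Φ.mulVec v := hlow v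
  have h2 : ∑ i, (v i) ^ 2 ≤ s * ‖v‖ ^ 2 := by
    calc ∑ i, (v i) ^ 2 ≤ ∑ _i : Fin s, ‖v‖ ^ 2 := by
          apply Finset.sum_le_sum
          intro i _
          have h3 : |v i| ≤ ‖v‖ := by simpa [Real.norm_eq_abs] using norm_le_pi_norm v i
          nlinarith [abs_nonneg (v i), sq_abs (v i)]
      _ = s * ‖v‖ ^ 2 := by simp [Finset.sum_const]
  have hs' : (0:ℝ) < s := by exact_mod_cast hs
  have hsum : ∑ i, -(c * μ / s) * (v i) ^ 2 = -(c * μ / s * ∑ i, (v i) ^ 2) := by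
    rw [Finset.mul_sum]; simp [Finset.sum_neg_distrib]
  rw [hsum]
  have hk : c * μ / s * s = c * μ := by field_simp
  have e1 := mul_le_mul_of_nonneg_left h2 hb.le
  have e2 := mul_le_mul_of_nonneg_left h1 hc.le
  nlinarith [e1, e2, hk]

lemma quad_scale {s : ℕ} (Φ : Matrix (Fin s) (Fin s) ℝ) (t : Fin s → ℝ) {c : ℝ} (hc : 0 < c) :
    ∫ u : Fin s → ℝ, Real.exp (-(c * ((u - t) ⬝ᵥ Φ.mulVec (u - t))) / 2)
      = ((Real.sqrt c) ^ s)⁻¹ * ∫ u : Fin s → ℝ, Real.exp (-((u - t) ⬝ᵥ Φ.mulVec (u - t)) / 2) := by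
  have h1 : ∫ u : Fin s → ℝ, Real.exp (-(c * ((u - t) ⬝ᵥ Φ.mulVec (u - t))) / 2)
      = ∫ v : Fin s → ℝ, Real.exp (-(c * (v ⬝ᵥ Φ.mulVec v)) / 2) :=
    integral_sub_right_eq_self (fun v => Real.exp (-(c * (v ⬝ᵥ Φ.mulVec v)) / 2)) t
  have h2 : ∫ u : Fin s → ℝ, Real.exp (-((u - t) ⬝ᵥ Φ.mulVec (u - t)) / 2)
      = ∫ v : Fin s → ℝ, Real.exp (-(v ⬝ᵥ Φ.mulVec v) / 2) :=
    integral_sub_right_eq_self (fun v => Real.exp (-(v ⬝ᵥ Φ.mulVec v) / 2)) t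
  rw [h1, h2]
  have h3 : ∀ v : Fin s → ℝ, Real.exp (-(c * (v ⬝ᵥ Φ.mulVec v)) / 2)
      = Real.exp (-((Real.sqrt c • v) ⬝ᵥ Φ.mulVec (Real.sqrt c • v)) / 2) := by
    intro v
    rw [Matrix.mulVec_smul, smul_dotProduct, dotProduct_smul, smul_eq_mul, smul_eq_mul,
      ← mul_assoc, Real.mul_self_sqrt hc.le]
  simp_rw [h3]
  rw [Measure.integral_comp_smul_of_nonneg volume
    (fun v => Real.exp (-(v ⬝ᵥ Φ.mulVec v) / 2)) (Real.sqrt c) (hR := Real.sqrt_nonneg c)]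
  simp [smul_eq_mul]


theorem gaussian_tail_ratio (s : ℕ) (Φ : Matrix (Fin s) (Fin s) ℝ) (hΦ : Φ.PosDef)
    (t : Fin s → ℝ) (C : ℝ) (hC : 0 ≤ C)
    (h : (Fin s → ℝ) → ℝ) (hh : ∀ u, h u = (u - t) ⬝ᵥ Φ.mulVec (u - t) + C)
    (α : ℝ) (hα : Real.sqrt s ≤ α) (utilde : Fin s → ℝ) :
    (∫ u in {u : Fin s → ℝ | Real.sqrt (h u) - Real.sqrt (h utilde) > α},
        Real.exp (-h u / 2)) / (∫ u : Fin s → ℝ, Real.exp (-h u / 2)) ≤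
      Real.exp (-(α - Real.sqrt s)^2 / 2) := by
  have hα0 : 0 ≤ α := le_trans (Real.sqrt_nonneg _) hα
  set q : (Fin s → ℝ) → ℝ := fun u => (u - t) ⬝ᵥ Φ.mulVec (u - t) with hq
  have hqnn : ∀ u, 0 ≤ q u := fun u => hΦ.posSemidef.dotProduct_mulVec_nonneg (u - t)
  -- case s = 0 : the set is empty
  rcases Nat.eq_zero_or_pos s with hs | hs
  · subst hs
    have hempty : {u : Fin 0 → ℝ | Real.sqrt (h u) - Real.sqrt (h utilde) > α} = ∅ := by
      ext u
      simp only [Set.mem_setOf_eq, Set.mem_empty_iff_false, iff_false, not_lt, gt_iff_lt]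
      have h1 : h u = C := by rw [hh]; simp [dotProduct]
      have h2 : h utilde = C := by rw [hh]; simp [dotProduct]
      rw [h1, h2]
      linarith
    rw [hempty]
    simp only [Measure.restrict_empty, integral_zero_measure, zero_div]
    positivity
  -- main case
  have hs' : (0:ℝ) < s := by exact_mod_cast hs
  have hsqs : (0:ℝ) < Real.sqrt s := Real.sqrt_pos.2 hs'
  set E := {u : Fin s → ℝ | Real.sqrt (h u) - Real.sqrt (h utilde) > α} with hE
  -- E ⊆ {u | α^2 < q u}
  have hsub : ∀ u ∈ E, α ^ 2 < q u := by
    intro u hu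
    have hu' : α < Real.sqrt (h u) - Real.sqrt (h utilde) := hu
    have hCle : Real.sqrt C ≤ Real.sqrt (h utilde) := by
      apply Real.sqrt_le_sqrt
      rw [hh]
      linarith [hqnn utilde]
    have h1 : α + Real.sqrt C < Real.sqrt (h u) := by
      linarith
    have h2 : (α + Real.sqrt C) ^ 2 < h u := by
      have := (Real.lt_sqrt (by positivity)).1 h1
      exact this
    have h3 : h u = q u + C := hh u
    nlinarith [Real.sqrt_nonneg C, Real.sq_sqrt hC]
  -- continuity and measurability
  have hcontq : Continuous q := by
    rw [hq]
    exact (quad_cont Φ).comp (continuous_id.sub continuous_const)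
  have hconth : Continuous h := by
    have : h = fun u => q u + C := funext hh
    rw [this]
    exact hcontq.add continuous_const
  have hmeasE : MeasurableSet E := by
    have : Continuous fun u => Real.sqrt (h u) - Real.sqrt (h utilde) :=
      (Real.continuous_sqrt.comp hconth).sub continuous_const
    exact measurableSet_lt measurable_const this.measurable
  -- integrability
  have hint : ∀ {c : ℝ}, 0 < c → Integrable fun u : Fin s → ℝ => Real.exp (-(c * q u) / 2) := by
    intro c hc
    have h0 : (0:ℝ) < c / 2 := by linarith
    have := (quad_integrable hs hΦ h0).comp_sub_right t
    have heq : ∀ u : Fin s → ℝ, Real.exp (-(c / 2 * ((u - t) ⬝ᵥ Φ.mulVec (u - t))))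
        = Real.exp (-(c * q u) / 2) := by
      intro u; rw [hq]; ring_nf
    simpa only [heq] using this
  have hint1 : Integrable fun u : Fin s → ℝ => Real.exp (-(q u) / 2) := by
    have := hint one_pos
    simpa only [one_mul] using this
  -- positivity of the base integral
  set D₀ : ℝ := ∫ u : Fin s → ℝ, Real.exp (-(q u) / 2) with hD₀
  have hD₀pos : 0 < D₀ := by
    rw [hD₀, integral_pos_iff_support_of_nonneg_ae
      (Filter.Eventually.of_forall fun u => (Real.exp_pos _).le) hint1]
    have hsupp : (Function.support fun u : Fin s → ℝ => Real.exp (-(q u) / 2)) = Set.univ := by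
      ext u; simp [Function.support, Real.exp_ne_zero]
    rw [hsupp]
    exact isOpen_univ.measure_pos volume Set.univ_nonempty
  -- factor out exp(-C/2)
  have hfact : ∀ u, Real.exp (-h u / 2) = Real.exp (-C / 2) * Real.exp (-(q u) / 2) := by
    intro u
    rw [← Real.exp_add, hh u, hq]
    ring_nf
  have hratio : (∫ u in E, Real.exp (-h u / 2)) / (∫ u : Fin s → ℝ, Real.exp (-h u / 2))
      = (∫ u in E, Real.exp (-(q u) / 2)) / D₀ := by
    simp_rw [hfact]
    rw [integral_const_mul, integral_const_mul, hD₀,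
      mul_div_mul_left _ _ (Real.exp_ne_zero _)]
  rw [hratio]
  set N₀ : ℝ := ∫ u in E, Real.exp (-(q u) / 2) with hN₀
  -- two cases: α = √s or √s < α
  rcases eq_or_lt_of_le hα with heq | hlt
  · -- α = √s : trivial bound by 1
    rw [← heq]
    simp only [sub_self, ne_eq, OfNat.ofNat_ne_zero, not_false_eq_true, zero_pow, neg_zero,
      zero_div, Real.exp_zero]
    rw [div_le_one hD₀pos, hN₀, hD₀]
    exact setIntegral_le_integral hint1
      (Filter.Eventually.of_forall fun u => (Real.exp_pos _).le)
  -- main case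
  have hαpos : 0 < α := lt_of_le_of_lt hsqs.le hlt
  set c : ℝ := s / α ^ 2 with hc
  have hc0 : 0 < c := by positivity
  have hcα : c * α ^ 2 = s := by rw [hc]; field_simp
  have hc1 : c < 1 := by
    rw [hc, div_lt_one (by positivity)]
    calc (s:ℝ) = Real.sqrt s ^ 2 := (Real.sq_sqrt hs'.le).symm
      _ < α ^ 2 := by nlinarith
  set lam : ℝ := (1 - c) / 2 with hlam
  have hlam0 : 0 < lam := by rw [hlam]; linarith
  -- pointwise bound on E
  have hpw : ∀ u ∈ E, Real.exp (-(q u) / 2)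
      ≤ Real.exp (-(lam * α ^ 2)) * Real.exp (-(c * q u) / 2) := by
    intro u hu
    rw [← Real.exp_add, Real.exp_le_exp]
    have := hsub u hu
    rw [hlam]
    nlinarith
  -- integral chain
  have step1 : N₀ ≤ ∫ u in E, Real.exp (-(lam * α ^ 2)) * Real.exp (-(c * q u) / 2) := by
    rw [hN₀]
    exact setIntegral_mono_on hint1.integrableOn
      (((hint hc0).const_mul _).integrableOn) hmeasE hpw
  have step2 : (∫ u in E, Real.exp (-(lam * α ^ 2)) * Real.exp (-(c * q u) / 2))
      ≤ Real.exp (-(lam * α ^ 2)) * ((Real.sqrt c ^ s)⁻¹ * D₀) := by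
    rw [integral_const_mul]
    apply mul_le_mul_of_nonneg_left _ (Real.exp_pos _).le
    have hle : (∫ u in E, Real.exp (-(c * q u) / 2)) ≤ ∫ u, Real.exp (-(c * q u) / 2) :=
      setIntegral_le_integral (hint hc0)
        (Filter.Eventually.of_forall fun u => (Real.exp_pos _).le)
    have hsc : (∫ u : Fin s → ℝ, Real.exp (-(c * q u) / 2)) = (Real.sqrt c ^ s)⁻¹ * D₀ := by
      rw [hD₀, hq]
      exact quad_scale Φ t hc0
    linarith [hle, hsc.le, hsc.ge]
  -- final numeric bound
  have hnum : Real.exp (-(lam * α ^ 2)) * (Real.sqrt c ^ s)⁻¹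
      ≤ Real.exp (-(α - Real.sqrt s) ^ 2 / 2) := by
    have hsqrtc : Real.sqrt c = Real.sqrt s / α := by
      rw [hc, Real.sqrt_div hs'.le, Real.sqrt_sq hα0]
    set r : ℝ := α / Real.sqrt s with hr
    have hr1 : 1 < r := by rw [hr, lt_div_iff₀ hsqs]; linarith
    have hr0 : 0 < r := by linarith
    have hinv : (Real.sqrt c ^ s)⁻¹ = r ^ s := by
      rw [hsqrtc, ← inv_pow, inv_div, hr]
    rw [hinv]
    have hrs : r * Real.sqrt s = α := div_mul_cancel₀ α hsqs.ne'
    have hlog : Real.log r ≤ r - 1 := Real.log_le_sub_one_of_pos hr0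
    have hrpow : r ^ s = Real.exp (s * Real.log r) := by
      rw [Real.exp_nat_mul, Real.exp_log hr0]
    rw [hrpow, ← Real.exp_add, Real.exp_le_exp]
    have hlamα : lam * α ^ 2 = (α ^ 2 - s) / 2 := by
      rw [hlam]
      linear_combination (-1/2 : ℝ) * hcα
    rw [hlamα]
    have e3 : (s:ℝ) * Real.log r ≤ s * (r - 1) :=
      mul_le_mul_of_nonneg_left hlog hs'.le
    have e4 : Real.sqrt s * Real.sqrt s = s := Real.mul_self_sqrt hs'.le
    have e5 : (s:ℝ) * r = Real.sqrt s * α := by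
      linear_combination (-r) * e4 + Real.sqrt s * hrs
    nlinarith [e3, e5, e4]
  rw [div_le_iff₀ hD₀pos]
  calc N₀ ≤ Real.exp (-(lam * α ^ 2)) * ((Real.sqrt c ^ s)⁻¹ * D₀) := step1.trans step2
    _ = (Real.exp (-(lam * α ^ 2)) * (Real.sqrt c ^ s)⁻¹) * D₀ := by ring
    _ ≤ Real.exp (-(α - Real.sqrt s) ^ 2 / 2) * D₀ :=
        mul_le_mul_of_nonneg_right hnum hD₀pos.le
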